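/- Let φ be a refinement-stable and non-contradictory consensus method for profiles of k split systems on X. Then for every profile P = (S_1, …, S_k) and every split A ∈ φ(P), there is at least one index i with A ∈ S_i; that is, every split of the output tree is already induced by some input tree. -/

import Mathlib

/-- An `X`-split, encoded as the part containing the distinguished taxon
`x₀`: a subset `A ⊆ X` with `x₀ ∈ A` and `A ≠ X` (representing `A | X∖A`). -/
def IsSplit {X : Type*} (x₀ : X) (A : Set X) : Prop :=
  x₀ ∈ A ∧ A ≠ Set.univ

/-- Two splits (each encoded by the part containing the distinguished taxon)
are compatible if `A ⊆ B`, `B ⊆ A`, or `A ∪ B = X` (i.e. one of the four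
intersections of their parts is empty). -/
def SplitCompatible {X : Type*} (A B : Set X) : Prop :=
  A ⊆ B ∨ B ⊆ A ∨ A ∪ B = Set.univ

/-- A split is trivial if one of its two parts is a singleton. -/
def IsTrivialSplit {X : Type*} (A : Set X) : Prop :=
  A.ncard = 1 ∨ (Set.univ \ A).ncard = 1

/-- A split system on `X`: a family of pairwise compatible splits containing
all trivial splits (the split encoding of an unrooted phylogenetic `X`-tree,
which determines the tree uniquely by Buneman's theorem). -/
def IsSplitSystem {X : Type*} (x₀ : X) (S : Set (Set X)) : Prop :=
  (∀ A ∈ S, IsSplit x₀ A) ∧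
  (∀ A ∈ S, ∀ B ∈ S, SplitCompatible A B) ∧
  ∀ A : Set X, IsSplit x₀ A → IsTrivialSplit A → A ∈ S

/-- The strict consensus of a profile: all splits present in every tree. -/
def strictCons {X : Type*} {k : ℕ} (P : Fin k → Set (Set X)) : Set (Set X) :=
  {A | ∀ i, A ∈ P i}

/-- The majority-rule consensus `MR_p`: all splits present in at least `p·k`
of the input trees. -/
def majCons {X : Type*} (p : ℝ) {k : ℕ} (P : Fin k → Set (Set X)) : Set (Set X) :=
  {A | p * (k : ℝ) ≤ (({i : Fin k | A ∈ P i}).ncard : ℝ)}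

lemma SplitCompatible.symm' {X : Type*} {A B : Set X} (h : SplitCompatible A B) :
    SplitCompatible B A := by
  rcases h with h | h | h
  · exact Or.inr (Or.inl h)
  · exact Or.inl h
  · exact Or.inr (Or.inr (by rwa [Set.union_comm]))

lemma key_lemma {X : Type*} [Fintype X] (hX : 2 ≤ Fintype.card X) (x₀ : X)
    (S : Set (Set X)) (hS : IsSplitSystem x₀ S)
    (A : Set X) (hA : IsSplit x₀ A) (hAnt : ¬ IsTrivialSplit A)
    (hcomp : ∀ C ∈ S, SplitCompatible A C) (hAS : A ∉ S) :
    ∃ B, IsSplit x₀ B ∧ ¬ SplitCompatible A B ∧ ∀ D ∈ S, SplitCompatible B D := by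
  obtain ⟨hSsplit, hScomp, hStriv⟩ := hS
  obtain ⟨y, hy⟩ := Fintype.exists_ne_of_one_lt_card (by omega) x₀
  -- {x₀} is a trivial split, hence in S
  have hx0S : ({x₀} : Set X) ∈ S := by
    refine hStriv _ ⟨rfl, fun hu => hy ?_⟩ (Or.inl (Set.ncard_singleton x₀))
    have : y ∈ ({x₀} : Set X) := hu ▸ Set.mem_univ y
    simpa using this
  -- choose C maximal in S with C ⊆ A
  obtain ⟨C, hCmem, hCmax⟩ := Set.Finite.exists_maximalFor id {C | C ∈ S ∧ C ⊆ A}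
    (Set.toFinite _) ⟨{x₀}, hx0S, by simpa using hA.1⟩
  obtain ⟨hCS, hCA⟩ := hCmem
  -- C ⊊ A
  have hCneA : C ≠ A := fun h => hAS (h ▸ hCS)
  obtain ⟨xa, hxaA, hxaC⟩ : ∃ x, x ∈ A ∧ x ∉ C := by
    by_contra h; push_neg at h
    exact hCneA (Set.Subset.antisymm hCA h)
  -- choose E minimal in S with A ⊆ E
  obtain ⟨z, hz⟩ : ∃ z, z ∉ A := by
    by_contra h; push_neg at h
    exact hA.2 (Set.eq_univ_of_forall h)
  have hzS : ({z}ᶜ : Set X) ∈ S := by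
    refine hStriv _ ⟨fun h => hz (by simp at h; rw [← h]; exact hA.1), fun hu => ?_⟩ ?_
    · have : z ∈ ({z}ᶜ : Set X) := hu ▸ Set.mem_univ z
      simp at this
    · right
      have : (Set.univ \ ({z}ᶜ : Set X)) = {z} := by ext w; simp
      rw [this, Set.ncard_singleton]
  obtain ⟨E, hEmem, hEmin⟩ := Set.Finite.exists_minimalFor id {E | E ∈ S ∧ A ⊆ E}
    (Set.toFinite _) ⟨{z}ᶜ, hzS, fun w hw h => hz (by simpa using h ▸ hw : z ∈ A)⟩
  obtain ⟨hES, hAE⟩ := hEmem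
  have hEneA : E ≠ A := fun h => hAS (h ▸ hES)
  obtain ⟨ze, hzeE, hzeA⟩ : ∃ x, x ∈ E ∧ x ∉ A := by
    by_contra h; push_neg at h
    exact hEneA (Set.Subset.antisymm h hAE)
  obtain ⟨w, hw⟩ : ∃ w, w ∉ E := by
    by_contra h; push_neg at h
    exact (hSsplit E hES).2 (Set.eq_univ_of_forall h)
  -- the new split
  refine ⟨(Aᶜ ∪ C) ∩ E, ⟨⟨Or.inr (hSsplit C hCS).1, hAE hA.1⟩, fun hu => ?_⟩, ?_, ?_⟩
  · have : xa ∈ (Aᶜ ∪ C) ∩ E := hu ▸ Set.mem_univ xa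
    rcases this.1 with h | h
    · exact h hxaA
    · exact hxaC h
  · -- incompatible with A
    rintro (h | h | h)
    · rcases (h hxaA).1 with h' | h'
      · exact h' hxaA
      · exact hxaC h'
    · exact hzeA (h ⟨Or.inl hzeA, hzeE⟩)
    · have : w ∈ A ∪ (Aᶜ ∪ C) ∩ E := h ▸ Set.mem_univ w
      rcases this with h' | h'
      · exact hw (hAE h')
      · exact hw h'.2
  · -- compatible with every D ∈ S
    intro D hD
    have hCB : C ⊆ (Aᶜ ∪ C) ∩ E := fun x hx => ⟨Or.inr hx, hAE (hCA hx)⟩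
    rcases hScomp C hCS D hD with hCD | hDC | hCDu
    · rcases hcomp D hD with hADs | hDA | hADu
      · rcases hScomp E hES D hD with hED | hDE | hEDu
        · exact Or.inl (fun x hx => hED hx.2)
        · have : E = D := Set.Subset.antisymm (hEmin ⟨hD, hADs⟩ hDE) hDE
          exact Or.inl (fun x hx => this ▸ hx.2)
        · refine Or.inr (Or.inr (Set.eq_univ_of_forall fun x => ?_))
          by_cases hxD : x ∈ D
          · exact Or.inr hxD
          · have hxE : x ∈ E := by
              have := hEDu ▸ Set.mem_univ x
              rcases this with h | h
              · exact h
              · exact absurd h hxD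
            exact Or.inl ⟨Or.inl (fun hxA => hxD (hADs hxA)), hxE⟩
      · have : C = D := Set.Subset.antisymm hCD (hCmax ⟨hD, hDA⟩ hCD)
        exact Or.inr (Or.inl (fun x hx => hCB (this ▸ hx)))
      · refine Or.inl (fun x hx => ?_)
        rcases hx.1 with h | h
        · have := hADu ▸ Set.mem_univ x
          rcases this with h' | h'
          · exact absurd h' h
          · exact h'
        · exact hCD h
    · exact Or.inr (Or.inl (fun x hx => hCB (hDC hx)))
    · refine Or.inr (Or.inr (Set.eq_univ_of_forall fun x => ?_))
      have := hCDu ▸ Set.mem_univ x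
      rcases this with h | h
      · exact Or.inl (hCB h)
      · exact Or.inr h

/-- If `φ` is a refinement-stable and non-contradictory consensus method for
profiles of split systems, then every split of the output `φ(P)` is already
induced by some input tree. -/
theorem output_splits_present_in_input
    {X : Type*} [Fintype X] (hX : 2 ≤ Fintype.card X) (x₀ : X)
    {k : ℕ} (hk : 1 ≤ k)
    (φ : (Fin k → Set (Set X)) → Set (Set X))
    (hmap : ∀ P : Fin k → Set (Set X),
      (∀ i, IsSplitSystem x₀ (P i)) → IsSplitSystem x₀ (φ P))
    (hstab : ∀ P P' : Fin k → Set (Set X),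
      (∀ i, IsSplitSystem x₀ (P i)) → (∀ i, IsSplitSystem x₀ (P' i)) →
      (∀ i, P i ⊆ P' i) → φ P ⊆ φ P')
    (hnc : ∀ P : Fin k → Set (Set X), (∀ i, IsSplitSystem x₀ (P i)) →
      ∀ A ∈ φ P, ∃ i, ∀ A' ∈ P i, SplitCompatible A A')
    (P : Fin k → Set (Set X)) (hP : ∀ i, IsSplitSystem x₀ (P i)) :
    ∀ A ∈ φ P, ∃ i, A ∈ P i := by
  intro A hA
  by_contra hcon
  push_neg at hcon
  have hφS := hmap P hP
  have hAsplit : IsSplit x₀ A := hφS.1 A hA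
  have hAnt : ¬ IsTrivialSplit A := fun ht => hcon ⟨0, hk⟩ ((hP ⟨0, hk⟩).2.2 A hAsplit ht)
  have hB : ∀ i, ∃ B, IsSplit x₀ B ∧ ¬ SplitCompatible A B ∧ ∀ C ∈ P i, SplitCompatible B C := by
    intro i
    by_cases hc : ∀ C ∈ P i, SplitCompatible A C
    · exact key_lemma hX x₀ (P i) (hP i) A hAsplit hAnt hc (hcon i)
    · push_neg at hc
      obtain ⟨C, hC, hnc'⟩ := hc
      exact ⟨C, (hP i).1 C hC, hnc', fun D hD => (hP i).2.1 C hC D hD⟩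
  choose B hB1 hB2 hB3 using hB
  have hP' : ∀ i, IsSplitSystem x₀ (insert (B i) (P i)) := by
    intro i
    refine ⟨?_, ?_, ?_⟩
    · rintro C (rfl | hC)
      · exact hB1 i
      · exact (hP i).1 C hC
    · rintro C (rfl | hC) D (rfl | hD)
      · exact Or.inl subset_rfl
      · exact hB3 i D hD
      · exact (hB3 i C hC).symm'
      · exact (hP i).2.1 C hC D hD
    · intro C hC ht
      exact Set.mem_insert_of_mem _ ((hP i).2.2 C hC ht)
  have hA' : A ∈ φ (fun i => insert (B i) (P i)) :=
    hstab P _ hP hP' (fun i => Set.subset_insert _ _) hA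
  obtain ⟨i, hi⟩ := hnc _ hP' A hA'
  exact hB2 i (hi (B i) (Set.mem_insert _ _))
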